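/- Let Ω be a continuous representable linear functional on 𝔄 ⊗_n 𝔅 with GNS representation π_Ω and cyclic vector ξ_Ω, and define φ_Ω(c, c') := ⟨π_Ω(c)ξ_Ω, π_Ω(c')ξ_Ω⟩. Then φ_Ω is a closed sesquilinear form on 𝔄 ⊗_n 𝔅: whenever v_n → v in ‖·‖_n̄ and φ_Ω(v_n − v_m, v_n − v_m) → 0 as n, m → ∞, one has φ_Ω(v_n − v, v_n − v) → 0. -/

import Mathlib

open scoped TensorProduct
open Filter

/-- Let `Ω` be a continuous representable linear functional on `𝔄 ⊗ₙ 𝔅`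
with GNS representation `π_Ω` (weakly continuous, with dense domain `D ⊂ H`) and cyclic
vector `ξ_Ω`, and let `φ_Ω(c, c') := ⟨π_Ω(c)ξ_Ω, π_Ω(c')ξ_Ω⟩`. Then `φ_Ω` is a closed
sesquilinear form on `𝔄 ⊗ₙ 𝔅`: whenever `vₙ → v` in `‖·‖_n̄` and
`φ_Ω(vₙ − vₘ, vₙ − vₘ) → 0` as `n, m → ∞`, one has `φ_Ω(vₙ − v, vₙ − v) → 0`. -/
theorem stmt16
    (H : Type*) [NormedAddCommGroup H] [InnerProductSpace ℂ H] [CompleteSpace H]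
    (D : Submodule ℂ H) (hD : Dense (D : Set H))
    (A B : Type*)
    [NormedAddCommGroup A] [NormedSpace ℂ A] [CompleteSpace A]
    [NormedAddCommGroup B] [NormedSpace ℂ B] [CompleteSpace B]
    -- the cross-norm n̄ on 𝔄 ⊗ 𝔅
    (N : TensorProduct ℂ A B → ℝ)
    (hN0 : ∀ z, 0 ≤ N z)
    (hNadd : ∀ z w, N (z + w) ≤ N z + N w)
    (hNsmul : ∀ (c : ℂ) z, N (c • z) = ‖c‖ * N z)
    (hcross : ∀ (a : A) (b : B), N (a ⊗ₜ[ℂ] b) = ‖a‖ * ‖b‖)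
    -- the GNS representation π_Ω of Ω, weakly continuous, with cyclic vector ξΩ
    (π : TensorProduct ℂ A B →ₗ[ℂ] (D →ₗ[ℂ] H))
    (hπcont : ∀ (c : ℕ → TensorProduct ℂ A B) (c₀ : TensorProduct ℂ A B),
      Tendsto (fun n => N (c n - c₀)) atTop (nhds 0) →
      ∀ ξ η : D, Tendsto (fun n => (inner ℂ (π (c n) ξ) (η : H) : ℂ)) atTop
        (nhds (inner ℂ (π c₀ ξ) (η : H))))
    (ξΩ : D)
    (Ω : TensorProduct ℂ A B → ℂ)
    (hΩ : ∀ c, Ω c = inner ℂ (π c ξΩ) (ξΩ : H)) :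
    -- φ_Ω(c, c') := ⟨π(c)ξΩ, π(c')ξΩ⟩ is closed:
    ∀ (v : ℕ → TensorProduct ℂ A B) (v₀ : TensorProduct ℂ A B),
      Tendsto (fun n => N (v n - v₀)) atTop (nhds 0) →
      (∀ ε : ℝ, 0 < ε → ∃ M : ℕ, ∀ n ≥ M, ∀ m ≥ M,
        ‖(inner ℂ (π (v n - v m) ξΩ) (π (v n - v m) ξΩ) : ℂ)‖ < ε) →
      Tendsto (fun n => (inner ℂ (π (v n - v₀) ξΩ) (π (v n - v₀) ξΩ) : ℂ))
        atTop (nhds 0) := by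
  intro v v₀ hconv hcauchy
  set x : ℕ → H := fun n => π (v n) ξΩ with hx
  -- the sequence x is Cauchy
  have hdiff : ∀ n m : ℕ, ((π (v n - v m)) ξΩ : H) = x n - x m := by
    intro n m; simp [hx, map_sub]
  have hcau : CauchySeq x := by
    rw [Metric.cauchySeq_iff]
    intro ε hε
    obtain ⟨M, hM⟩ := hcauchy (ε ^ 2) (by positivity)
    refine ⟨M, fun n hn m hm => ?_⟩
    have := hM n hn m hm
    rw [hdiff n m, inner_self_eq_norm_sq_to_K] at this
    have h2 : ‖x n - x m‖ ^ 2 < ε ^ 2 := by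
      simpa [norm_pow] using this
    rw [dist_eq_norm]
    exact lt_of_pow_lt_pow_left₀ 2 hε.le h2
  obtain ⟨x₀, hx₀⟩ := cauchySeq_tendsto_of_complete hcau
  -- identify x₀ with π v₀ ξΩ using weak continuity and density
  have hweak := hπcont v v₀ hconv ξΩ
  have hid : x₀ = (π v₀) ξΩ := by
    apply hD.eq_of_inner_left (𝕜 := ℂ)
    intro η hη
    have h1 : Tendsto (fun n => (inner ℂ (x n) (η : H) : ℂ)) atTop (nhds (inner ℂ x₀ (η : H))) :=
      Tendsto.inner hx₀ tendsto_const_nhds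
    exact tendsto_nhds_unique h1 (hweak ⟨η, hη⟩)
  -- conclude
  have hlim : Tendsto (fun n => x n - x₀) atTop (nhds 0) := by
    simpa using hx₀.sub (tendsto_const_nhds (x := x₀))
  have : Tendsto (fun n => (inner ℂ (x n - x₀) (x n - x₀) : ℂ)) atTop (nhds 0) := by
    simpa using hlim.inner (𝕜 := ℂ) hlim
  convert this using 2 with n
  simp [hx, map_sub, hid]
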